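/- Let x^{(0)} ∈ Q and define the projected-gradient iterates x^{(k+1)} := T_L(x^{(k)}) for k ≥ 0. If f satisfies the gradient-mapping domination condition on Q with constant ω > 0, then for every integer k ≥ 1: f(x^{(k)}) − f* ≤ max{ 4L/(ω k), (√2/2)^k · (f(x^{(0)}) − f*) }. -/

import Mathlib

open InnerProductSpace

section aux

variable {E : Type*} [NormedAddCommGroup E] [InnerProductSpace ℝ E] [CompleteSpace E]

/-- Descent lemma for functions with Lipschitz gradient. -/
lemma descent_lemma (f : E → ℝ) (f' : E → E)
    (hf : ∀ x, HasGradientAt f (f' x) x) (L : ℝ)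
    (hLip : ∀ x y, ‖f' x - f' y‖ ≤ L * ‖x - y‖) (x y : E) :
    f y ≤ f x + ⟪f' x, y - x⟫_ℝ + L / 2 * ‖y - x‖ ^ 2 := by
  set v := y - x with hv
  have hc : ∀ t : ℝ, HasDerivAt (fun t : ℝ => x + t • v) v t := by
    intro t
    simpa using ((hasDerivAt_id t).smul_const v).const_add x
  have hh : ∀ t : ℝ, HasDerivAt (fun t : ℝ => f (x + t • v))
      ⟪f' (x + t • v), v⟫_ℝ t := by
    intro t
    have := (hasGradientAt_iff_hasFDerivAt.mp (hf (x + t • v))).comp_hasDerivAt t (hc t)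
    simpa [InnerProductSpace.toDual_apply_apply, Function.comp_def] using this
  set φ : ℝ → ℝ := fun t => f (x + t • v) - f x - t * ⟪f' x, v⟫_ℝ - L * ‖v‖ ^ 2 * t ^ 2 / 2
    with hφ
  have hφd : ∀ t : ℝ, HasDerivAt φ
      (⟪f' (x + t • v), v⟫_ℝ - ⟪f' x, v⟫_ℝ - L * ‖v‖ ^ 2 * t) t := by
    intro t
    have h1 : HasDerivAt (fun t : ℝ => t * ⟪f' x, v⟫_ℝ) ⟪f' x, v⟫_ℝ t := by
      simpa using (hasDerivAt_id t).mul_const ⟪f' x, v⟫_ℝ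
    have h2 : HasDerivAt (fun t : ℝ => L * ‖v‖ ^ 2 * t ^ 2 / 2) (L * ‖v‖ ^ 2 * t) t := by
      have := ((hasDerivAt_pow 2 t).const_mul (L * ‖v‖ ^ 2)).div_const 2
      exact this.congr_deriv (by ring)
    exact (((hh t).sub_const (f x)).sub h1).sub h2
  have hanti : AntitoneOn φ (Set.Icc (0:ℝ) 1) := by
    apply antitoneOn_of_deriv_nonpos (convex_Icc 0 1)
    · exact fun t _ => ((hφd t).continuousAt).continuousWithinAt
    · exact fun t _ => ((hφd t).differentiableAt).differentiableWithinAt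
    · intro t ht
      rw [interior_Icc] at ht
      rw [(hφd t).deriv]
      have h1 : ⟪f' (x + t • v), v⟫_ℝ - ⟪f' x, v⟫_ℝ = ⟪f' (x + t • v) - f' x, v⟫_ℝ := by
        rw [inner_sub_left]
      have h2 : ⟪f' (x + t • v) - f' x, v⟫_ℝ ≤ L * ‖v‖ ^ 2 * t := by
        calc ⟪f' (x + t • v) - f' x, v⟫_ℝ ≤ ‖f' (x + t • v) - f' x‖ * ‖v‖ :=
              real_inner_le_norm _ _
          _ ≤ L * ‖(x + t • v) - x‖ * ‖v‖ := by
              have := hLip (x + t • v) x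
              have hvnn : (0:ℝ) ≤ ‖v‖ := norm_nonneg v
              nlinarith [this]
          _ = L * ‖v‖ ^ 2 * t := by
              rw [add_sub_cancel_left, norm_smul, Real.norm_eq_abs,
                abs_of_pos ht.1]
              ring
      linarith [h1 ▸ h2]
  have h01 := hanti (Set.left_mem_Icc.mpr zero_le_one)
    (Set.right_mem_Icc.mpr zero_le_one) zero_le_one
  have hφ0 : φ 0 = 0 := by simp [hφ]
  have hφ1 : φ 1 = f y - f x - ⟪f' x, v⟫_ℝ - L * ‖v‖ ^ 2 / 2 := by
    simp [hφ, hv]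
  rw [hφ0, hφ1] at h01
  linarith

/-- Variational inequality characterizing the projection. -/
lemma proj_varineq {Q : Set E} (hQconv : Convex ℝ Q) {u p : E} (hp : p ∈ Q)
    (hmin : ∀ y ∈ Q, ‖p - u‖ ≤ ‖y - u‖) {y : E} (hy : y ∈ Q) :
    ⟪u - p, y - p⟫_ℝ ≤ 0 := by
  by_contra hcon
  push_neg at hcon
  set a := ⟪u - p, y - p⟫_ℝ with ha
  have hyp : ‖y - p‖ ^ 2 > 0 := by
    rcases eq_or_ne y p with h | h
    · simp [ha, h] at hcon
    · exact pow_pos (norm_pos_iff.mpr (sub_ne_zero.mpr h)) 2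
  set t : ℝ := min 1 (a / ‖y - p‖ ^ 2) with hts
  have ht0 : 0 < t := lt_min one_pos (div_pos hcon hyp)
  have ht1 : t ≤ 1 := min_le_left _ _
  have htw : t * ‖y - p‖ ^ 2 ≤ a := by
    have : t ≤ a / ‖y - p‖ ^ 2 := min_le_right _ _
    calc t * ‖y - p‖ ^ 2 ≤ (a / ‖y - p‖ ^ 2) * ‖y - p‖ ^ 2 :=
          mul_le_mul_of_nonneg_right this (le_of_lt hyp)
      _ = a := div_mul_cancel₀ a hyp.ne'
  have hw : p + t • (y - p) ∈ Q := by
    have := hQconv hp hy (by linarith : (0:ℝ) ≤ 1 - t) (le_of_lt ht0) (by ring)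
    convert this using 1
    module
  have hle := hmin _ hw
  have hsq : ‖p - u‖ ^ 2 ≤ ‖p + t • (y - p) - u‖ ^ 2 := by
    have h1 : (0:ℝ) ≤ ‖p - u‖ := norm_nonneg _
    nlinarith [hle]
  have hexp : ‖p + t • (y - p) - u‖ ^ 2
      = ‖p - u‖ ^ 2 - 2 * t * a + t ^ 2 * ‖y - p‖ ^ 2 := by
    have : p + t • (y - p) - u = (p - u) + t • (y - p) := by abel
    rw [this, norm_add_sq_real, real_inner_smul_right, norm_smul, Real.norm_eq_abs,
      abs_of_pos ht0]
    have hpu : ⟪p - u, y - p⟫_ℝ = -a := by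
      rw [ha, ← inner_neg_left]
      congr 1
      abel
    rw [hpu]
    ring
  rw [hexp] at hsq
  -- 2 t a ≤ t² ‖y-p‖² = t * (t ‖y-p‖²) ≤ t * a, so t a ≤ 0, contradiction
  have : 2 * t * a ≤ t ^ 2 * ‖y - p‖ ^ 2 := by linarith
  nlinarith [htw, ht0, hcon]

end aux


set_option maxHeartbeats 1000000 in
/-- Projected gradient descent under the gradient-mapping domination condition:
`f(x⁽ᵏ⁾) − f* ≤ max{4L/(ωk), (√2/2)ᵏ (f(x⁽⁰⁾) − f*)}` for all `k ≥ 1`. -/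
theorem stmt5 (n : ℕ) (Q : Set (EuclideanSpace ℝ (Fin n)))
    (hQne : Q.Nonempty) (hQc : IsCompact Q) (hQconv : Convex ℝ Q)
    (L : ℝ) (hL : 0 < L)
    (f : EuclideanSpace ℝ (Fin n) → ℝ)
    (f' : EuclideanSpace ℝ (Fin n) → EuclideanSpace ℝ (Fin n))
    -- `f` is differentiable with gradient `f'`
    (hf : ∀ x, HasGradientAt f (f' x) x)
    -- the gradient is `L`-Lipschitz
    (hLip : ∀ x y, ‖f' x - f' y‖ ≤ L * ‖x - y‖)
    -- `f* = min_{x ∈ Q} f x`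
    (fstar : ℝ) (hfstar : IsLeast (f '' Q) fstar)
    -- `proj` is the (unique) Euclidean projection onto `Q`
    (proj : EuclideanSpace ℝ (Fin n) → EuclideanSpace ℝ (Fin n))
    (hproj : ∀ x, proj x ∈ Q ∧ ∀ y ∈ Q, ‖proj x - x‖ ≤ ‖y - x‖)
    -- `T_L(x) = proj_Q (x − (1/L) ∇f(x))` and `G_L(x) = L (x − T_L(x))`
    (T : EuclideanSpace ℝ (Fin n) → EuclideanSpace ℝ (Fin n))
    (hT : ∀ x, T x = proj (x - (1 / L) • f' x))
    (G : EuclideanSpace ℝ (Fin n) → EuclideanSpace ℝ (Fin n))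
    (hG : ∀ x, G x = L • (x - T x))
    -- gradient-mapping domination with constant `ω > 0`
    (ω : ℝ) (hω : 0 < ω)
    (hdom : ∀ x ∈ Q, Real.sqrt (2 * ω) * (f (T x) - fstar) ≤ ‖G x‖)
    -- the projected-gradient iterates
    (x : ℕ → EuclideanSpace ℝ (Fin n)) (hx0 : x 0 ∈ Q)
    (hxk : ∀ k : ℕ, x (k + 1) = T (x k)) :
    ∀ k : ℕ, 1 ≤ k →
      f (x k) - fstar ≤
        max (4 * L / (ω * k)) ((Real.sqrt 2 / 2) ^ k * (f (x 0) - fstar)) := by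
  have hTQ : ∀ z, T z ∈ Q := fun z => by rw [hT]; exact (hproj _).1
  have hxQ : ∀ k, x k ∈ Q := by
    intro k
    induction k with
    | zero => exact hx0
    | succ k _ => rw [hxk]; exact hTQ _
  have hfs : ∀ z ∈ Q, fstar ≤ f z := fun z hz => hfstar.2 ⟨z, hz, rfl⟩
  obtain ⟨c, hc⟩ : ∃ c : ℝ, c = ω / L := ⟨_, rfl⟩
  have hcpos : 0 < c := hc ▸ div_pos hω hL
  obtain ⟨δ, hδ⟩ : ∃ δ : ℕ → ℝ, ∀ k, δ k = f (x k) - fstar := ⟨_, fun _ => rfl⟩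
  have hδnn : ∀ k, 0 ≤ δ k := fun k => (hδ k) ▸ sub_nonneg.mpr (hfs _ (hxQ k))
  -- key recursion: δ(k+1) + c·δ(k+1)² ≤ δ k
  have hkey : ∀ k, δ (k + 1) + c * δ (k + 1) ^ 2 ≤ δ k := by
    intro k
    set z := x k with hz'
    have hz : z ∈ Q := hxQ k
    set u := z - (1 / L) • f' z with hu
    set p := T z with hp
    have hpQ : p ∈ Q := hTQ z
    have hvi : ⟪u - p, z - p⟫_ℝ ≤ 0 := by
      have hp' : p = proj u := hT z
      refine proj_varineq hQconv (hp' ▸ (hproj u).1) (fun y hy => ?_) hz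
      rw [hp']; exact (hproj u).2 y hy
    have hgrad : L * ‖z - p‖ ^ 2 ≤ ⟪f' z, z - p⟫_ℝ := by
      have hup : u - p = (z - p) - (1 / L) • f' z := by rw [hu]; abel
      rw [hup, inner_sub_left, real_inner_smul_left, real_inner_self_eq_norm_sq] at hvi
      have hL' : (0:ℝ) < 1 / L := by positivity
      have hLL : (1 / L) * L = 1 := by field_simp
      nlinarith [hvi]
    have hdes := descent_lemma f f' hf L hLip z p
    have hinner : ⟪f' z, p - z⟫_ℝ = - ⟪f' z, z - p⟫_ℝ := by
      rw [← inner_neg_right]; congr 1; abel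
    have hnorm : ‖p - z‖ = ‖z - p‖ := norm_sub_rev _ _
    rw [hinner, hnorm] at hdes
    have hdec : f p ≤ f z - L / 2 * ‖z - p‖ ^ 2 := by linarith
    have hGn : ‖G z‖ = L * ‖z - p‖ := by
      rw [hG, norm_smul, Real.norm_eq_abs, abs_of_pos hL]
    have hδ1 : 0 ≤ f p - fstar := sub_nonneg.mpr (hfs _ hpQ)
    have hdomz := hdom z hz
    rw [← hp, hGn] at hdomz
    have hsq : 2 * ω * (f p - fstar) ^ 2 ≤ L ^ 2 * ‖z - p‖ ^ 2 := by
      have h2ω : (0:ℝ) ≤ 2 * ω := by positivity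
      have hss := Real.sq_sqrt h2ω
      have h0 : 0 ≤ Real.sqrt (2 * ω) * (f p - fstar) :=
        mul_nonneg (Real.sqrt_nonneg _) hδ1
      nlinarith [hdomz]
    have hcomb : c * (f p - fstar) ^ 2 ≤ L / 2 * ‖z - p‖ ^ 2 := by
      rw [hc, div_mul_eq_mul_div, div_le_iff₀ hL]
      nlinarith
    have hδk1 : δ (k + 1) = f p - fstar := by
      rw [hδ, hxk k, ← hz', ← hp]
    rw [hδk1, hδ k, ← hz']
    linarith
  have hmono : ∀ k, δ (k + 1) ≤ δ k := by
    intro k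
    nlinarith [hkey k, sq_nonneg (δ (k + 1)), hcpos]
  -- counting invariant
  have hinv : ∀ j : ℕ, ∃ a b : ℕ, a + b = j ∧ δ j ≤ (1 / 2 : ℝ) ^ a * δ 0 ∧
      δ j * (c * (b : ℝ) / 2) ≤ 1 := by
    intro j
    induction j with
    | zero => exact ⟨0, 0, rfl, by simp, by simp⟩
    | succ j ih =>
      obtain ⟨a, b, hab, h1, h2⟩ := ih
      by_cases hcase : δ (j + 1) ≤ δ j / 2
      · refine ⟨a + 1, b, by omega, ?_, ?_⟩
        · calc δ (j + 1) ≤ δ j / 2 := hcase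
            _ ≤ ((1 / 2 : ℝ) ^ a * δ 0) / 2 := by linarith
            _ = (1 / 2 : ℝ) ^ (a + 1) * δ 0 := by ring
        · have h3 : δ (j + 1) * (c * (b : ℝ) / 2) ≤ δ j * (c * (b : ℝ) / 2) :=
            mul_le_mul_of_nonneg_right (hmono j) (by positivity)
          linarith
      · push_neg at hcase
        have hhalf : 0 ≤ δ j / 2 := div_nonneg (hδnn j) (by norm_num)
        have hpos : 0 < δ (j + 1) := hhalf.trans_lt hcase
        have hjpos : 0 < δ j := lt_of_lt_of_le hpos (hmono j)
        refine ⟨a, b + 1, by omega, (hmono j).trans h1, ?_⟩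
        have h1j : c * (b : ℝ) / 2 ≤ 1 / δ j := by
          rw [le_div_iff₀ hjpos]; linarith [h2]
        have hstep : 1 / δ j + c / 2 ≤ 1 / δ (j + 1) := by
          rw [div_add_div _ _ (ne_of_gt hjpos) two_ne_zero,
            div_le_div_iff₀ (by positivity) hpos]
          nlinarith [hkey j, mul_nonneg (by linarith : (0:ℝ) ≤ 2 * δ (j + 1) - δ j)
            (mul_nonneg hcpos.le hpos.le)]
        have hfin : c * ((b : ℝ) + 1) / 2 ≤ 1 / δ (j + 1) := by
          have : c * ((b : ℝ) + 1) / 2 = c * (b : ℝ) / 2 + c / 2 := by ring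
          rw [this]
          calc c * (b : ℝ) / 2 + c / 2 ≤ 1 / δ j + c / 2 := by linarith
            _ ≤ 1 / δ (j + 1) := hstep
        have := (le_div_iff₀ hpos).mp hfin
        push_cast
        linarith [this]
  -- conclusion
  intro k hk
  obtain ⟨a, b, hab, h1, h2⟩ := hinv k
  rw [← hδ k, ← hδ 0]
  by_cases hc2 : k ≤ 2 * a
  · refine le_max_of_le_right ?_
    have hs2 : (Real.sqrt 2 / 2) ^ 2 = 1 / 2 := by
      rw [div_pow, Real.sq_sqrt (by norm_num : (0:ℝ) ≤ 2)]; norm_num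
    have h12 : ((1 : ℝ) / 2) ^ a = (Real.sqrt 2 / 2) ^ (2 * a) := by
      rw [pow_mul, hs2]
    have hle1 : Real.sqrt 2 / 2 ≤ 1 := by
      nlinarith [Real.sq_sqrt (by norm_num : (0:ℝ) ≤ 2), Real.sqrt_nonneg 2]
    have hge0 : (0:ℝ) ≤ Real.sqrt 2 / 2 := by positivity
    have hpow : (Real.sqrt 2 / 2) ^ (2 * a) ≤ (Real.sqrt 2 / 2) ^ k :=
      pow_le_pow_of_le_one hge0 hle1 hc2
    calc δ k ≤ (1 / 2 : ℝ) ^ a * δ 0 := h1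
      _ = (Real.sqrt 2 / 2) ^ (2 * a) * δ 0 := by rw [h12]
      _ ≤ (Real.sqrt 2 / 2) ^ k * δ 0 :=
          mul_le_mul_of_nonneg_right hpow (hδnn 0)
  · push_neg at hc2
    refine le_max_of_le_left ?_
    have hbk : (k : ℝ) ≤ 2 * (b : ℝ) := by
      have : k ≤ 2 * b := by omega
      exact_mod_cast this
    have hkpos : (0:ℝ) < k := by exact_mod_cast hk
    have h3 : δ k * (c * (k : ℝ) / 4) ≤ 1 := by
      have : δ k * (c * (k : ℝ) / 4) ≤ δ k * (c * (b : ℝ) / 2) := by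
        apply mul_le_mul_of_nonneg_left _ (hδnn k)
        nlinarith [hcpos]
      linarith
    rw [le_div_iff₀ (by positivity : (0:ℝ) < ω * k)]
    have hω' : ω = c * L := by rw [hc]; field_simp
    rw [hω']
    have h4 := mul_le_mul_of_nonneg_right h3 (by positivity : (0:ℝ) ≤ 4 * L)
    have heq : δ k * (c * (k : ℝ) / 4) * (4 * L) = δ k * (c * L * (k : ℝ)) := by ring
    rw [heq] at h4
    linarith
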